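/- Let H be a numerical semigroup and let ρ(H) be the number of even gaps of H. Then every even integer of the form 4ρ(H)+2i with i ∈ ℕ belongs to H, i.e. {4ρ + 2i : i ∈ ℕ} ⊆ H where ρ = ρ(H). -/
import Mathlib


/-- A numerical semigroup: a cofinite subsemigroup of ℕ containing 0. -/
def IsNumSgp (S : Set ℕ) : Prop :=
  0 ∈ S ∧ (∀ a ∈ S, ∀ b ∈ S, a + b ∈ S) ∧ (Sᶜ).Finite

/-- The genus: number of gaps. -/
noncomputable def genus (S : Set ℕ) : ℕ := Sᶜ.ncard

/-- The j-th smallest positive element (non-gap) of `S`, 1-indexed. -/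
noncomputable def nongap (S : Set ℕ) (j : ℕ) : ℕ :=
  Nat.nth (fun n => n ∈ S ∧ 0 < n) (j - 1)

/-- The i-th smallest gap of `S`, 1-indexed. -/
noncomputable def gapNth (S : Set ℕ) (i : ℕ) : ℕ :=
  Nat.nth (fun n => n ∉ S) (i - 1)

/-- The weight of the semigroup. -/
noncomputable def weight (S : Set ℕ) : ℕ :=
  ∑ i ∈ Finset.Icc 1 (genus S), (gapNth S i - i)

/-- The number of even gaps of `S`. -/
noncomputable def evenGaps (S : Set ℕ) : ℕ := {n | n ∉ S ∧ Even n}.ncard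

/-- `S` is γ-hyperelliptic: exactly γ even elements in [2,4γ], and the
(γ+1)-th positive element is 4γ+2. -/
noncomputable def GammaHyper (S : Set ℕ) (γ : ℕ) : Prop :=
  {n ∈ S | Even n ∧ 2 ≤ n ∧ n ≤ 4 * γ}.ncard = γ ∧ nongap S (γ + 1) = 4 * γ + 2

theorem stmt_2 (S : Set ℕ) (hS : IsNumSgp S) :
    ∀ i : ℕ, 4 * evenGaps S + 2 * i ∈ S := by
  obtain ⟨h0, hadd, hfin⟩ := hS
  set G : Set ℕ := {m | 2 * m ∉ S} with hG
  have hGfin : G.Finite := by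
    have hsub : G ⊆ (fun m => 2 * m) ⁻¹' Sᶜ := fun m hm => hm
    exact (hfin.preimage (fun a _ b _ h => by omega)).subset hsub
  have hcard : evenGaps S = G.ncard := by
    have himg : {n | n ∉ S ∧ Even n} = (fun m => 2 * m) '' G := by
      ext n
      constructor
      · rintro ⟨hn, m, hm⟩
        exact ⟨m, by simp only [hG, Set.mem_setOf_eq]; rw [show 2 * m = n by omega]; exact hn,
          by show 2 * m = n; omega⟩
      · rintro ⟨m, hm, rfl⟩
        exact ⟨hm, ⟨m, by ring⟩⟩
    rw [evenGaps, himg, Set.ncard_image_of_injective _ (fun a b h => by omega)]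
  classical
  have main : ∀ n : ℕ, G.ncard ≤ n / 2 → 2 * n ∈ S := by
    intro n hn
    by_contra hns
    have key : ∀ k ∈ Finset.range (n / 2 + 1),
        (if 2 * k ∈ S then n - k else k) ∈ hGfin.toFinset := by
      intro k hk
      simp only [Finset.mem_range] at hk
      rw [Set.Finite.mem_toFinset]
      by_cases h : 2 * k ∈ S
      · simp only [h, if_true, hG, Set.mem_setOf_eq]
        intro hmem
        have hsum : 2 * k + 2 * (n - k) ∈ S := hadd _ h _ hmem
        rw [show 2 * k + 2 * (n - k) = 2 * n by omega] at hsum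
        exact hns hsum
      · rw [if_neg h]; exact h
    have hinj : ∀ k ∈ Finset.range (n / 2 + 1), ∀ k' ∈ Finset.range (n / 2 + 1),
        (if 2 * k ∈ S then n - k else k) = (if 2 * k' ∈ S then n - k' else k') → k = k' := by
      intro k hk k' hk' heq
      simp only [Finset.mem_range] at hk hk'
      have hk2 : 2 * k ≤ n := by omega
      have hk2' : 2 * k' ≤ n := by omega
      by_cases h : 2 * k ∈ S <;> by_cases h' : 2 * k' ∈ S <;>
        simp only [h, h', if_true, if_false] at heq
      · omega
      · have : k = k' := by omega
        exact absurd (this ▸ h) h'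
      · have : k = k' := by omega
        exact absurd (this ▸ h') h
      · exact heq
    have hle := Finset.card_le_card_of_injOn _ key hinj
    rw [Finset.card_range, ← Set.ncard_eq_toFinset_card _ hGfin] at hle
    omega
  intro i
  have := main (2 * evenGaps S + i) (by rw [hcard] at *; omega)
  rw [show 2 * (2 * evenGaps S + i) = 4 * evenGaps S + 2 * i by ring] at this
  exact this
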